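/- arXiv:2602.07634 — 6 statements merged into one kernel-verified Lean document; each statement's English description precedes it below -/
import Mathlib

section
/- For a closed convex set P of probability measures on a finite set Θ: there exists a non-trivial experiment π : Θ → Δ(Y) consistent with P (i.e., π(·|θ) is not constant in θ and all p ∈ P induce the same marginal on Y) if and only if the affine dimension of P is strictly less than |Θ| − 1. -/
open Finset

/-- The probability simplex on a finite set `Θ`. -/
def simplex (Θ : Type*) [Fintype Θ] : Set (Θ → ℝ) :=
  {p | (∀ θ, 0 ≤ p θ) ∧ ∑ θ, p θ = 1}

/-- For a nonempty closed convex set `P` of probability measures on a finite `Θ`, there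
exists a non-trivial experiment consistent with `P` iff the affine dimension of `P` is
strictly less than `|Θ| - 1`. -/
theorem stmt4 {Θ : Type} [Fintype Θ]
    (P : Set (Θ → ℝ)) (hPsub : P ⊆ simplex Θ) (hPcl : IsClosed P)
    (hPconv : Convex ℝ P) (hPne : P.Nonempty) :
    (∃ (Y : Type) (instY : Fintype Y) (π : Θ → Y → ℝ),
      (∀ θ y, 0 ≤ π θ y) ∧
      (∀ θ, ∑ y ∈ @Finset.univ Y instY, π θ y = 1) ∧
      (¬ ∀ θ θ' : Θ, π θ = π θ') ∧
      (∀ p ∈ P, ∀ p' ∈ P, ∀ y, ∑ θ, π θ y * p θ = ∑ θ, π θ y * p' θ)) ↔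
    Module.finrank ℝ (vectorSpan ℝ P) + 1 < Fintype.card Θ := by
  classical
  constructor
  · rintro ⟨Y, instY, π, hpos, hsum1, hnc, hcons⟩
    push_neg at hnc
    obtain ⟨θ0, θ1, h01⟩ := hnc
    obtain ⟨y0, hy0⟩ := Function.ne_iff.mp h01
    have hθne : θ0 ≠ θ1 := by rintro rfl; exact h01 rfl
    have hcard2 : 2 ≤ Fintype.card Θ := Fintype.one_lt_card_iff.mpr ⟨θ0, θ1, hθne⟩
    set c : Θ → ℝ := fun θ => π θ y0 with hc
    let T : (Θ → ℝ) →ₗ[ℝ] ℝ × ℝ :=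
      { toFun := fun v => (∑ θ, c θ * v θ, ∑ θ, v θ)
        map_add' := by
          intro u v
          simp [mul_add, Finset.sum_add_distrib]
        map_smul' := by
          intro r v
          simp [Finset.mul_sum, mul_left_comm] }
    have hker : vectorSpan ℝ P ≤ LinearMap.ker T := by
      rw [vectorSpan_def, Submodule.span_le]
      rintro v ⟨p, hp, p', hp', rfl⟩
      have h1 := hcons p hp p' hp' y0
      have h2 : ∑ θ, p θ = 1 := (hPsub hp).2
      have h3 : ∑ θ, p' θ = 1 := (hPsub hp').2
      simp only [SetLike.mem_coe, LinearMap.mem_ker, vsub_eq_sub]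
      have : T (p - p') = (∑ θ, c θ * p θ - ∑ θ, c θ * p' θ, ∑ θ, p θ - ∑ θ, p' θ) := by
        simp [T, mul_sub, Finset.sum_sub_distrib]
      rw [this, h1, h2, h3]
      simp [hc]
    have hsurj : Function.Surjective T := by
      rintro ⟨a, b⟩
      have hcc : c θ0 - c θ1 ≠ 0 := sub_ne_zero.mpr hy0
      set s : ℝ := (a - b * c θ1) / (c θ0 - c θ1) with hs
      refine ⟨s • (Pi.single θ0 1 : Θ → ℝ) + (b - s) • (Pi.single θ1 1 : Θ → ℝ), ?_⟩
      have e0 : ∀ r : ℝ, ∀ θ' : Θ, ∑ θ, c θ * (r • (Pi.single θ' 1 : Θ → ℝ)) θ = r * c θ' := by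
        intro r θ'
        simp [Pi.single_apply, mul_ite, Finset.sum_ite_eq', mul_comm]
      have e1 : ∀ r : ℝ, ∀ θ' : Θ, ∑ θ, (r • (Pi.single θ' 1 : Θ → ℝ)) θ = r := by
        intro r θ'
        simp [Pi.single_apply, Finset.sum_ite_eq']
      have hT : T (s • (Pi.single θ0 1 : Θ → ℝ) + (b - s) • (Pi.single θ1 1 : Θ → ℝ))
          = (s * c θ0 + (b - s) * c θ1, s + (b - s)) := by
        simp only [T, LinearMap.coe_mk, AddHom.coe_mk, Pi.add_apply, mul_add,
          Finset.sum_add_distrib]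
        rw [e0, e0, e1, e1]
      rw [hT]
      refine Prod.ext ?_ (by simp)
      show s * c θ0 + (b - s) * c θ1 = a
      have hsc := div_mul_cancel₀ (a - b * c θ1) hcc
      rw [← hs] at hsc
      linear_combination hsc
    have hrank := LinearMap.finrank_range_add_finrank_ker T
    rw [LinearMap.range_eq_top.mpr hsurj] at hrank
    have htop : Module.finrank ℝ (⊤ : Submodule ℝ (ℝ × ℝ)) = 2 := by
      simp [finrank_top]
    have hcard : Module.finrank ℝ (Θ → ℝ) = Fintype.card Θ :=
      Module.finrank_fintype_fun_eq_card ℝ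
    have hle : Module.finrank ℝ (vectorSpan ℝ P) ≤ Module.finrank ℝ (LinearMap.ker T) :=
      Submodule.finrank_mono hker
    omega
  · intro hd
    have hn : 1 ≤ Fintype.card Θ := by omega
    haveI : Nonempty Θ := Fintype.card_pos_iff.mp hn
    let PE : Set (EuclideanSpace ℝ Θ) := (WithLp.linearEquiv 2 ℝ (Θ → ℝ)).symm '' P
    have hdE : Module.finrank ℝ (vectorSpan ℝ PE) + 1 < Fintype.card Θ := by
      have hmap : Submodule.map ((WithLp.linearEquiv 2 ℝ (Θ → ℝ)).symm : (Θ → ℝ) →ₗ[ℝ] EuclideanSpace ℝ Θ) (vectorSpan ℝ P) = vectorSpan ℝ PE :=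
        AffineMap.map_vectorSpan (k := ℝ) ((WithLp.linearEquiv 2 ℝ (Θ → ℝ)).symm : (Θ → ℝ) →ₗ[ℝ] EuclideanSpace ℝ Θ).toAffineMap
      rw [← hmap, LinearEquiv.finrank_map_eq]; exact hd
    let ones : EuclideanSpace ℝ Θ := WithLp.toLp 2 (fun _ => 1)
    have hones : ones ≠ 0 := by
      intro h
      have := congrArg (fun v : EuclideanSpace ℝ Θ => v (Classical.arbitrary Θ)) h
      simpa [ones] using this
    let W : Submodule ℝ (EuclideanSpace ℝ Θ) := vectorSpan ℝ PE
    let U : Submodule ℝ (EuclideanSpace ℝ Θ) := W ⊔ (ℝ ∙ ones)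
    have hUrank : Module.finrank ℝ U < Fintype.card Θ := by
      have h1 := Submodule.finrank_sup_add_finrank_inf_eq W (ℝ ∙ ones)
      have h2 : Module.finrank ℝ (ℝ ∙ ones) = 1 := finrank_span_singleton hones
      have h3 : Module.finrank ℝ W + 1 < Fintype.card Θ := hdE
      have h4 : Module.finrank ℝ U + Module.finrank ℝ ((W ⊓ (ℝ ∙ ones) : Submodule ℝ (EuclideanSpace ℝ Θ)))
          = Module.finrank ℝ W + Module.finrank ℝ (ℝ ∙ ones) := h1
      omega
    have hUne : U ≠ ⊤ := by
      intro h
      rw [h, finrank_top, finrank_euclideanSpace] at hUrank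
      exact lt_irrefl _ hUrank
    have hbot : Uᗮ ≠ ⊥ := by
      rw [Ne, Submodule.orthogonal_eq_bot_iff]
      exact hUne
    obtain ⟨cv, hcU, hc0⟩ := Submodule.ne_bot_iff _ |>.mp hbot
    set c : Θ → ℝ := fun θ => cv θ with hcdef
    have hinner : ∀ u ∈ U, ∑ θ, u θ * c θ = 0 := by
      intro u hu
      have := (Submodule.mem_orthogonal _ _).mp hcU u hu
      simpa [PiLp.inner_apply, RCLike.inner_apply, conj_trivial, hcdef, mul_comm] using this
    have hcW : ∀ v ∈ W, ∑ θ, c θ * v θ = 0 := by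
      intro v hv
      have := hinner v (le_sup_left (a := W) (b := ℝ ∙ ones) hv)
      simpa [mul_comm] using this
    have hsumc : ∑ θ, c θ = 0 := by
      have := hinner ones (le_sup_right (a := W) (b := ℝ ∙ ones)
        (Submodule.mem_span_singleton_self ones))
      simpa [ones] using this
    obtain ⟨θm, _, hθm⟩ := Finset.exists_min_image Finset.univ c ⟨Classical.arbitrary Θ, Finset.mem_univ _⟩
    obtain ⟨θM, _, hθM⟩ := Finset.exists_max_image Finset.univ c ⟨Classical.arbitrary Θ, Finset.mem_univ _⟩
    have hlt : c θm < c θM := by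
      by_contra hle
      push_neg at hle
      have hconst : ∀ θ, c θ = c θm := fun θ =>
        le_antisymm (le_trans (hθM θ (Finset.mem_univ θ)) hle) (hθm θ (Finset.mem_univ θ))
      have : (Fintype.card Θ : ℝ) * c θm = 0 := by
        rw [← hsumc]
        rw [Finset.sum_congr rfl (fun θ _ => hconst θ)]
        simp [Finset.sum_const, mul_comm]
      have hcm : c θm = 0 := by
        have hcpos : (0:ℝ) < Fintype.card Θ := by exact_mod_cast hn
        exact (mul_eq_zero.mp this).resolve_left (ne_of_gt hcpos)
      apply hc0
      ext θ
      rw [show cv θ = c θ from rfl, hconst θ, hcm]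
      rfl
    set d : ℝ := c θM - c θm with hddef
    have hd0 : 0 < d := sub_pos.mpr hlt
    set a : Θ → ℝ := fun θ => (c θ - c θm) / d with hadef
    have ha0 : ∀ θ, 0 ≤ a θ := fun θ =>
      div_nonneg (sub_nonneg.mpr (hθm θ (Finset.mem_univ θ))) hd0.le
    have ha1 : ∀ θ, a θ ≤ 1 := fun θ => by
      rw [hadef]
      rw [div_le_one hd0]
      have := hθM θ (Finset.mem_univ θ)
      simp [hddef]
      linarith
    refine ⟨Bool, inferInstance, fun θ y => if y = true then a θ else 1 - a θ, ?_, ?_, ?_, ?_⟩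
    · intro θ y
      cases y <;> simp [ha0 θ]
      linarith [ha1 θ]
    · intro θ
      simp
    · intro h
      have h1 := congrFun (h θM θm) true
      simp only [if_pos rfl] at h1
      have haM : a θM = 1 := by
        rw [hadef]
        exact div_self hd0.ne'
      have ham : a θm = 0 := by simp [hadef]
      rw [haM, ham] at h1
      exact one_ne_zero h1
    · intro p hp p' hp' y
      have h2 : ∑ θ, p θ = 1 := (hPsub hp).2
      have h3 : ∑ θ, p' θ = 1 := (hPsub hp').2
      have hv : (WithLp.toLp 2 p : EuclideanSpace ℝ Θ) -ᵥ (WithLp.toLp 2 p' : EuclideanSpace ℝ Θ) ∈ W :=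
        vsub_mem_vectorSpan ℝ (show _ ∈ PE from ⟨p, hp, rfl⟩) (show _ ∈ PE from ⟨p', hp', rfl⟩)
      have hc1 : ∑ θ, c θ * (p θ - p' θ) = 0 := hcW _ hv
      have hs1 : ∑ θ, (p θ - p' θ) = 0 := by
        rw [Finset.sum_sub_distrib, h2, h3]; ring
      have hkey : ∑ θ, a θ * p θ = ∑ θ, a θ * p' θ := by
        have expand : ∑ θ, a θ * (p θ - p' θ)
            = ((∑ θ, c θ * (p θ - p' θ)) - c θm * ∑ θ, (p θ - p' θ)) / d := by
          rw [Finset.mul_sum, ← Finset.sum_sub_distrib, Finset.sum_div]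
          refine Finset.sum_congr rfl fun θ _ => ?_
          rw [hadef]
          ring
        rw [hc1, hs1] at expand
        simp only [mul_zero, sub_zero, zero_div] at expand
        have := expand
        rw [show (∑ θ, a θ * (p θ - p' θ)) = (∑ θ, a θ * p θ) - ∑ θ, a θ * p' θ by
          rw [← Finset.sum_sub_distrib]; exact Finset.sum_congr rfl fun θ _ => by ring] at this
        linarith
      cases y
      · simp only [Bool.false_eq_true, if_false]
        rw [show (∑ θ, (1 - a θ) * p θ) = (∑ θ, p θ) - ∑ θ, a θ * p θ by
          rw [← Finset.sum_sub_distrib]; exact Finset.sum_congr rfl fun θ _ => by ring]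
        rw [show (∑ θ, (1 - a θ) * p' θ) = (∑ θ, p' θ) - ∑ θ, a θ * p' θ by
          rw [← Finset.sum_sub_distrib]; exact Finset.sum_congr rfl fun θ _ => by ring]
        rw [h2, h3, hkey]
      · simpa using hkey
end

section
/- Given one binary signal structure witnessing dimension deficiency: if P ⊆ Δ(Θ) is closed convex with dim(P) ≤ |Θ| − 2, then there exists a vector e ∈ ℝ^Θ orthogonal to all differences p − p' (p, p' ∈ P), not a scalar multiple of the constant vector 1, and ε > 0, such that π(y₁|θ) = 1/2 + ε e(θ), π(y₂|θ) = 1/2 − ε e(θ) defines a non-trivial experiment on Y = {y₁, y₂} consistent with P. -/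
open Finset

private lemma stmt5aux {Θ : Type} [Fintype Θ] [Nonempty Θ]
    (P : Set (Θ → ℝ))
    (hdim : Module.finrank ℝ (vectorSpan ℝ P) + 2 ≤ Fintype.card Θ) :
    ∃ e : Θ → ℝ, e ≠ 0 ∧ (∀ v ∈ vectorSpan ℝ P, ∑ θ, e θ * v θ = 0) ∧ ∑ θ, e θ = 0 := by
  classical
  let φ : EuclideanSpace ℝ Θ ≃ₗ[ℝ] (Θ → ℝ) := WithLp.linearEquiv 2 ℝ (Θ → ℝ)
  let W₀ : Submodule ℝ (EuclideanSpace ℝ Θ) := (vectorSpan ℝ P).comap φ.toLinearMap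
  let one : EuclideanSpace ℝ Θ := WithLp.toLp 2 (fun _ => 1)
  let W : Submodule ℝ (EuclideanSpace ℝ Θ) := W₀ ⊔ Submodule.span ℝ {one}
  have hone : one ≠ 0 := by
    intro h
    have := congrArg (fun x : EuclideanSpace ℝ Θ => x (Classical.arbitrary Θ)) h
    simpa [one] using this
  have hW₀ : Module.finrank ℝ W₀ = Module.finrank ℝ (vectorSpan ℝ P) := by
    have h : W₀ = (vectorSpan ℝ P).map φ.symm.toLinearMap := by
      rw [Submodule.map_equiv_eq_comap_symm]; simp [W₀]
    rw [h]
    exact LinearEquiv.finrank_map_eq φ.symm _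
  have hWlt : Module.finrank ℝ W < Fintype.card Θ := by
    have h1 : Module.finrank ℝ W ≤ Module.finrank ℝ W₀ + Module.finrank ℝ (Submodule.span ℝ {one}) :=
      Submodule.finrank_add_le_finrank_add_finrank _ _
    have h2 : Module.finrank ℝ (Submodule.span ℝ {one}) = 1 := finrank_span_singleton hone
    omega
  have hWne : W ≠ ⊤ := by
    intro h
    rw [h] at hWlt
    have : Module.finrank ℝ (⊤ : Submodule ℝ (EuclideanSpace ℝ Θ)) = Fintype.card Θ := by
      rw [finrank_top]; simp [finrank_euclideanSpace]
    omega
  have hbot : Wᗮ ≠ ⊥ := by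
    intro h
    exact hWne (Submodule.orthogonal_eq_bot_iff.mp h)
  obtain ⟨e, heW, he0⟩ := Submodule.exists_mem_ne_zero_of_ne_bot hbot
  have hinner : ∀ v ∈ W, (inner ℝ v e : ℝ) = 0 := fun v hv => (Submodule.mem_orthogonal W e).mp heW v hv
  refine ⟨φ e, ?_, ?_, ?_⟩
  · intro h
    exact he0 (by ext θ; exact congrFun h θ)
  · intro v hv
    have hvW : (φ.symm v) ∈ W := le_sup_left (α := Submodule ℝ (EuclideanSpace ℝ Θ)) (by
      show φ.symm v ∈ W₀
      simp [W₀, Submodule.mem_comap]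
      simpa using hv)
    have := hinner _ hvW
    simpa [PiLp.inner_apply, RCLike.inner_apply, mul_comm, φ, WithLp.linearEquiv] using this
  · have hW1 : one ∈ W := le_sup_right (α := Submodule ℝ (EuclideanSpace ℝ Θ)) (Submodule.mem_span_singleton_self one)
    have := hinner _ hW1
    simpa [PiLp.inner_apply, RCLike.inner_apply, one, φ, WithLp.linearEquiv] using this

private lemma stmt5main {Θ : Type} [Fintype Θ] [Nonempty Θ]
    (P : Set (Θ → ℝ)) (hPsub : P ⊆ {p | (∀ θ₁, 0 ≤ p θ₁) ∧ ∑ θ, p θ = 1})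
    (e : Θ → ℝ) (he0 : e ≠ 0)
    (horth : ∀ v ∈ vectorSpan ℝ P, ∑ θ, e θ * v θ = 0) (hsum : ∑ θ, e θ = 0) :
    ∃ (ε : ℝ), 0 < ε ∧
      (∀ p ∈ P, ∀ p' ∈ P, ∑ θ, e θ * (p θ - p' θ) = 0) ∧
      (¬ ∃ c : ℝ, ∀ θ, e θ = c) ∧
      (∀ θ, 0 ≤ 1/2 + ε * e θ ∧ 1/2 + ε * e θ ≤ 1) ∧
      (¬ ∀ θ θ' : Θ, 1/2 + ε * e θ = 1/2 + ε * e θ') ∧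
      (∀ p ∈ P, ∀ p' ∈ P,
        (∑ θ, (1/2 + ε * e θ) * p θ = ∑ θ, (1/2 + ε * e θ) * p' θ) ∧
        (∑ θ, (1/2 - ε * e θ) * p θ = ∑ θ, (1/2 - ε * e θ) * p' θ)) := by
  classical
  -- e nonconstant
  have hnc : ¬ ∃ c : ℝ, ∀ θ, e θ = c := by
    rintro ⟨c, hc⟩
    have h1 : ∑ θ, e θ = (Fintype.card Θ : ℝ) * c := by
      simp [hc, Finset.sum_const, nsmul_eq_mul]
    have hcard : (0:ℝ) < Fintype.card Θ := by
      exact_mod_cast Fintype.card_pos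
    have hc0 : c = 0 := by
      rw [hsum] at h1
      rcases mul_eq_zero.mp h1.symm with h | h
      · exact absurd h hcard.ne'
      · exact h
    exact he0 (funext fun θ => by simp [hc θ, hc0])
  -- bound
  obtain ⟨θ₀, hθ₀⟩ : ∃ θ, e θ ≠ 0 := by
    by_contra h
    push_neg at h
    exact he0 (funext h)
  set B := Finset.univ.sup' Finset.univ_nonempty (fun θ => |e θ|) with hB
  have hBθ : ∀ θ, |e θ| ≤ B := fun θ => Finset.le_sup' (fun θ => |e θ|) (Finset.mem_univ θ)
  have hBpos : 0 < B := lt_of_lt_of_le (abs_pos.mpr hθ₀) (hBθ θ₀)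
  refine ⟨1/(2*B), by positivity, ?_, hnc, ?_, ?_, ?_⟩
  · intro p hp p' hp'
    exact horth _ (vsub_mem_vectorSpan ℝ hp hp')
  · intro θ
    have h1 : |1/(2*B) * e θ| ≤ 1/2 := by
      rw [abs_mul, abs_of_pos (by positivity : (0:ℝ) < 1/(2*B))]
      rw [div_mul_eq_mul_div, mul_comm]
      rw [div_le_div_iff₀ (by positivity) (by norm_num)]
      nlinarith [hBθ θ]
    have := abs_le.mp h1
    constructor <;> linarith [this.1, this.2]
  · intro h
    apply hnc
    refine ⟨e θ₀, fun θ => ?_⟩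
    have := h θ θ₀
    have hε : (0:ℝ) < 1/(2*B) := by positivity
    nlinarith [this]
  · intro p hp p' hp'
    have hd := horth _ (vsub_mem_vectorSpan ℝ hp hp')
    have hdv : ∑ θ, e θ * (p θ - p' θ) = 0 := by simpa [vsub_eq_sub] using hd
    have hs1 : ∑ θ, p θ = 1 := (hPsub hp).2
    have hs2 : ∑ θ, p' θ = 1 := (hPsub hp').2
    constructor
    · have key : ∑ θ, (1/2 + 1/(2*B) * e θ) * p θ - ∑ θ, (1/2 + 1/(2*B) * e θ) * p' θ = 0 := by
        rw [← Finset.sum_sub_distrib]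
        have expand : ∀ θ, (1/2 + 1/(2*B)*e θ)*p θ - (1/2 + 1/(2*B)*e θ)*p' θ
            = 1/2 * p θ - 1/2 * p' θ + 1/(2*B) * (e θ * (p θ - p' θ)) := fun θ => by ring
        simp_rw [expand]
        rw [Finset.sum_add_distrib, Finset.sum_sub_distrib, ← Finset.mul_sum, ← Finset.mul_sum,
          ← Finset.mul_sum, hs1, hs2, hdv]
        ring
      linarith [key]
    · have key : ∑ θ, (1/2 - 1/(2*B) * e θ) * p θ - ∑ θ, (1/2 - 1/(2*B) * e θ) * p' θ = 0 := by
        rw [← Finset.sum_sub_distrib]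
        have expand : ∀ θ, (1/2 - 1/(2*B)*e θ)*p θ - (1/2 - 1/(2*B)*e θ)*p' θ
            = 1/2 * p θ - 1/2 * p' θ - 1/(2*B) * (e θ * (p θ - p' θ)) := fun θ => by ring
        simp_rw [expand]
        rw [Finset.sum_sub_distrib, Finset.sum_sub_distrib, ← Finset.mul_sum, ← Finset.mul_sum,
          ← Finset.mul_sum, hs1, hs2, hdv]
        ring
      linarith [key]


/-- If `P ⊆ Δ(Θ)` is closed convex with `dim P ≤ |Θ| - 2`, then there exist a vector `e`
orthogonal to all differences of elements of `P`, not a multiple of the constant vector,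
and `ε > 0`, such that `π(y₁|θ) = 1/2 + ε e(θ)`, `π(y₂|θ) = 1/2 - ε e(θ)` is a non-trivial
binary experiment consistent with `P`. -/
theorem stmt5 {Θ : Type} [Fintype Θ]
    (P : Set (Θ → ℝ)) (hPsub : P ⊆ simplex Θ) (hPcl : IsClosed P)
    (hPconv : Convex ℝ P) (hPne : P.Nonempty)
    (hdim : Module.finrank ℝ (vectorSpan ℝ P) + 2 ≤ Fintype.card Θ) :
    ∃ (e : Θ → ℝ) (ε : ℝ), 0 < ε ∧
      (∀ p ∈ P, ∀ p' ∈ P, ∑ θ, e θ * (p θ - p' θ) = 0) ∧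
      (¬ ∃ c : ℝ, ∀ θ, e θ = c) ∧
      (∀ θ, 0 ≤ 1/2 + ε * e θ ∧ 1/2 + ε * e θ ≤ 1) ∧
      (¬ ∀ θ θ' : Θ, 1/2 + ε * e θ = 1/2 + ε * e θ') ∧
      (∀ p ∈ P, ∀ p' ∈ P,
        (∑ θ, (1/2 + ε * e θ) * p θ = ∑ θ, (1/2 + ε * e θ) * p' θ) ∧
        (∑ θ, (1/2 - ε * e θ) * p θ = ∑ θ, (1/2 - ε * e θ) * p' θ)) := by
  classical
  haveI : Nonempty Θ := Fintype.card_pos_iff.mp (by omega)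
  obtain ⟨e, he0, horth, hsum⟩ := stmt5aux P hdim
  exact ⟨e, stmt5main P hPsub e he0 horth hsum⟩
end

section
/- Closure under Bayesian updating of partially identified sets: suppose P₀ = Σ_φ τ₀(φ) P_φ is partially identified by (τ₀, Φ) and π : Θ → Δ(Y) is Φ-measurable. Let μ(y) = Σ_φ π(y|φ) τ₀(φ) and assume μ(y) > 0. Then the set of prior-by-prior Bayesian posteriors P_y = { p_y : p_y(θ) = π(y|θ) p₀(θ)/μ(y), p₀ ∈ P₀ } equals Σ_φ τ_y(φ) P_φ, where τ_y(φ) = π(y|φ) τ₀(φ)/μ(y) is the Bayesian update of τ₀. -/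
open Finset

/-- The Minkowski combination `∑ i, τ i • P i`. -/
def mix {Θ Φ : Type*} [Fintype Θ] [Fintype Φ] (τ : Φ → ℝ) (P : Φ → Set (Θ → ℝ)) :
    Set (Θ → ℝ) :=
  {p | ∃ q : Φ → Θ → ℝ, (∀ i, q i ∈ P i) ∧ p = fun θ => ∑ i, τ i * q i θ}

/-- Closure of partially identified sets under Bayesian updating: the prior-by-prior
posterior set of `P₀ = ∑ φ, τ₀ φ • P_φ` under a `Φ`-measurable experiment `π` given `y`
(with marginal `μ y > 0`) equals `∑ φ, τ_y φ • P_φ`, where `τ_y` is the Bayesian update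
of the reduced-form prior `τ₀`. -/
theorem stmt6 {Θ Φ Y : Type*} [Fintype Θ] [Fintype Φ] [Fintype Y]
    (cell : Θ → Φ) (hcell : Function.Surjective cell)
    (rep : Φ → Θ) (hrep : ∀ i, cell (rep i) = i)
    (τ₀ : Φ → ℝ) (hτ0 : ∀ i, 0 < τ₀ i) (hτ1 : ∑ i, τ₀ i = 1)
    (Pφ : Φ → Set (Θ → ℝ))
    (hPφ : ∀ i, ∀ q ∈ Pφ i, q ∈ simplex Θ ∧ ∀ θ, cell θ ≠ i → q θ = 0)
    (P₀ : Set (Θ → ℝ)) (hdecomp : P₀ = mix τ₀ Pφ)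
    (π : Θ → Y → ℝ) (hπ0 : ∀ θ y, 0 ≤ π θ y) (hπ1 : ∀ θ, ∑ y, π θ y = 1)
    (hmeas : ∀ θ θ', cell θ = cell θ' → π θ = π θ')
    (μ : Y → ℝ) (hμ : ∀ y, μ y = ∑ i, π (rep i) y * τ₀ i)
    (y : Y) (hμy : 0 < μ y) :
    {py : Θ → ℝ | ∃ p₀ ∈ P₀, py = fun θ => π θ y * p₀ θ / μ y} =
      mix (fun i => π (rep i) y * τ₀ i / μ y) Pφ := by
  have key : ∀ (q : Φ → Θ → ℝ), (∀ i, q i ∈ Pφ i) → ∀ i θ,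
      π θ y * q i θ = π (rep i) y * q i θ := by
    intro q hq i θ
    by_cases h : cell θ = i
    · rw [hmeas θ (rep i) (by rw [h, hrep])]
    · rw [(hPφ i (q i) (hq i)).2 θ h]; ring
  ext py
  constructor
  · rintro ⟨p₀, hp₀, rfl⟩
    rw [hdecomp] at hp₀
    obtain ⟨q, hq, rfl⟩ := hp₀
    refine ⟨q, hq, ?_⟩
    funext θ
    simp only [Finset.mul_sum, Finset.sum_div]
    refine Finset.sum_congr rfl fun i _ => ?_
    have := key q hq i θ
    field_simp
    linear_combination τ₀ i * this
  · rintro ⟨q, hq, rfl⟩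
    refine ⟨fun θ => ∑ i, τ₀ i * q i θ, by rw [hdecomp]; exact ⟨q, hq, rfl⟩, ?_⟩
    funext θ
    simp only [Finset.mul_sum, Finset.sum_div]
    refine Finset.sum_congr rfl fun i _ => ?_
    have := key q hq i θ
    field_simp
    linear_combination (-τ₀ i) * this
end

section
/- Aumann plausibility of consistent experiments under partial identification: if P₀ = Σ_φ τ₀(φ) P_φ with each P_φ ⊆ Δ(φ) convex, and π : Θ → Δ(Y) is Φ-measurable with induced marginal μ(y) = Σ_φ π(y|φ) τ₀(φ) having full support on Y, then the prior-by-prior posterior sets satisfy Σ_{y∈Y} μ(y) P_y = P₀ (equality of Minkowski sums). -/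
open Finset

/-- Aumann plausibility of consistent experiments under partial identification: if
`P₀ = ∑ φ, τ₀ φ • P_φ` with each `P_φ ⊆ Δ(φ)` convex, and `π` is `Φ`-measurable with
full-support marginal `μ`, then the Minkowski combination of the prior-by-prior
posterior sets recovers `P₀`: `∑ y, μ y • P_y = P₀`. -/
theorem stmt7 {Θ Φ Y : Type*} [Fintype Θ] [Fintype Φ] [Fintype Y]
    (cell : Θ → Φ) (hcell : Function.Surjective cell)
    (rep : Φ → Θ) (hrep : ∀ i, cell (rep i) = i)
    (τ₀ : Φ → ℝ) (hτ0 : ∀ i, 0 < τ₀ i) (hτ1 : ∑ i, τ₀ i = 1)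
    (Pφ : Φ → Set (Θ → ℝ)) (hPφconv : ∀ i, Convex ℝ (Pφ i))
    (hPφ : ∀ i, ∀ q ∈ Pφ i, q ∈ simplex Θ ∧ ∀ θ, cell θ ≠ i → q θ = 0)
    (P₀ : Set (Θ → ℝ)) (hdecomp : P₀ = mix τ₀ Pφ)
    (π : Θ → Y → ℝ) (hπ0 : ∀ θ y, 0 ≤ π θ y) (hπ1 : ∀ θ, ∑ y, π θ y = 1)
    (hmeas : ∀ θ θ', cell θ = cell θ' → π θ = π θ')
    (μ : Y → ℝ) (hμ : ∀ y, μ y = ∑ i, π (rep i) y * τ₀ i) (hμpos : ∀ y, 0 < μ y)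
    (Py : Y → Set (Θ → ℝ))
    (hPy : ∀ y, Py y = {py : Θ → ℝ | ∃ p₀ ∈ P₀, py = fun θ => π θ y * p₀ θ / μ y}) :
    mix μ Py = P₀ := by
  apply Set.Subset.antisymm
  · -- mix μ Py ⊆ P₀
    rintro p ⟨q, hq, rfl⟩
    -- extract posteriors
    have hq' : ∀ y, ∃ p₀ ∈ P₀, q y = fun θ => π θ y * p₀ θ / μ y := by
      intro y
      have := hq y
      rw [hPy y] at this
      exact this
    choose p₀ hp₀mem hp₀eq using hq'
    -- each p₀ y decomposes
    have hdec : ∀ y, ∃ s : Φ → Θ → ℝ, (∀ i, s i ∈ Pφ i) ∧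
        p₀ y = fun θ => ∑ i, τ₀ i * s i θ := by
      intro y
      have := hp₀mem y
      rw [hdecomp] at this
      exact this
    choose s hs hseq using hdec
    rw [hdecomp]
    refine ⟨fun i θ => ∑ y, π (rep i) y * s y i θ, ?_, ?_⟩
    · intro i
      have hmem : (∑ y, (π (rep i) y) • (s y i)) ∈ Pφ i := by
        apply (hPφconv i).sum_mem
        · intro y _; exact hπ0 _ y
        · exact hπ1 (rep i)
        · intro y _; exact hs y i
      have : (∑ y, (π (rep i) y) • (s y i)) = fun θ => ∑ y, π (rep i) y * s y i θ := by
        funext θ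
        simp [Finset.sum_apply]
      rwa [this] at hmem
    · funext θ
      have hterm : ∀ y, μ y * q y θ = π θ y * p₀ y θ := by
        intro y
        rw [hp₀eq y]
        field_simp [ne_of_gt (hμpos y)]
      calc ∑ y, μ y * q y θ = ∑ y, π θ y * p₀ y θ := by
              exact Finset.sum_congr rfl fun y _ => hterm y
        _ = ∑ y, ∑ i, π θ y * (τ₀ i * s y i θ) := by
              refine Finset.sum_congr rfl fun y _ => ?_
              rw [hseq y, Finset.mul_sum]
        _ = ∑ i, ∑ y, π θ y * (τ₀ i * s y i θ) := Finset.sum_comm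
        _ = ∑ i, τ₀ i * ∑ y, π (rep i) y * s y i θ := by
              refine Finset.sum_congr rfl fun i _ => ?_
              rw [Finset.mul_sum]
              refine Finset.sum_congr rfl fun y _ => ?_
              by_cases h : cell θ = i
              · have : π θ = π (rep i) := hmeas θ (rep i) (by rw [h, hrep])
                rw [this]; ring
              · rw [(hPφ i (s y i) (hs y i)).2 θ h]; ring
  · -- P₀ ⊆ mix μ Py
    intro p₀ hp₀
    refine ⟨fun y θ => π θ y * p₀ θ / μ y, ?_, ?_⟩
    · intro y
      rw [hPy y]
      exact ⟨p₀, hp₀, rfl⟩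
    · funext θ
      have : ∀ y, μ y * (π θ y * p₀ θ / μ y) = π θ y * p₀ θ := by
        intro y
        field_simp [ne_of_gt (hμpos y)]
      rw [Finset.sum_congr rfl fun y _ => this y, ← Finset.sum_mul, hπ1 θ, one_mul]
end

section
/- The set of functionals constant on a prior set closed under consistent-experiment multiplication: let P ⊆ Δ(Θ) be closed convex such that every experiment consistent with P induces an Aumann-plausible information structure. Let V = {v ∈ ℝ^Θ : ⟨v, p − p'⟩ = 0 for all p, p' ∈ P}. Then V is closed under pointwise multiplication: if v, v' ∈ V then the pointwise product vv' ∈ V. -/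
open Finset

/-- If every experiment consistent with the closed convex prior set `P` induces an
Aumann-plausible information structure (the Minkowski combination, with the marginal
weights, of the prior-by-prior posterior sets recovers `P`), then the space
`V = {v : ⟨v, p - p'⟩ = 0 ∀ p, p' ∈ P}` of linear functionals constant on `P` is closed
under pointwise multiplication. -/
theorem stmt14 {Θ : Type} [Fintype Θ]
    (P : Set (Θ → ℝ)) (hPsub : P ⊆ simplex Θ) (hPcl : IsClosed P)
    (hPconv : Convex ℝ P) (hPne : P.Nonempty)
    (H : ∀ (Y : Type) (instY : Fintype Y) (π : Θ → Y → ℝ) (μ : Y → ℝ),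
      (∀ θ y, 0 ≤ π θ y) →
      (∀ θ, ∑ y ∈ @Finset.univ Y instY, π θ y = 1) →
      (∀ p ∈ P, ∀ y, ∑ θ, π θ y * p θ = μ y) →
      (∀ y, 0 < μ y) →
      {p : Θ → ℝ | ∃ q : Y → Θ → ℝ,
        (∀ y, ∃ p₀ ∈ P, q y = fun θ => π θ y * p₀ θ / μ y) ∧
        p = fun θ => ∑ y ∈ @Finset.univ Y instY, μ y * q y θ} = P) :
    ∀ v v' : Θ → ℝ,
      (∀ p ∈ P, ∀ p' ∈ P, ∑ θ, v θ * (p θ - p' θ) = 0) →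
      (∀ p ∈ P, ∀ p' ∈ P, ∑ θ, v' θ * (p θ - p' θ) = 0) →
      (∀ p ∈ P, ∀ p' ∈ P, ∑ θ, (v θ * v' θ) * (p θ - p' θ) = 0) := by
  intro v v' hv hv' p hp p' hp'
  obtain ⟨p₀, hp₀⟩ := hPne
  set S : ℝ := ∑ θ, |v θ| with hS
  have hS0 : 0 ≤ S := Finset.sum_nonneg fun θ _ => abs_nonneg _
  set ε : ℝ := 1 / (2 * (S + 1)) with hε
  have hεpos : 0 < ε := by positivity
  have hvS : ∀ θ, |v θ| ≤ S := by
    intro θ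
    exact Finset.single_le_sum (fun θ _ => abs_nonneg (v θ)) (Finset.mem_univ θ)
  have hεv : ∀ θ, |ε * v θ| ≤ 1 / 2 := by
    intro θ
    rw [abs_mul, abs_of_pos hεpos]
    calc ε * |v θ| ≤ ε * (S + 1) := by
          apply mul_le_mul_of_nonneg_left _ hεpos.le
          linarith [hvS θ]
      _ = 1 / 2 := by
          rw [hε]; field_simp
  -- the inner product ⟨v, p⟩ is constant on P, equal to a := ⟨v, p₀⟩
  set a : ℝ := ∑ θ, v θ * p₀ θ with ha
  have hconst : ∀ r ∈ P, ∑ θ, v θ * r θ = a := by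
    intro r hr
    have := hv r hr p₀ hp₀
    have hsub : ∑ θ, v θ * (r θ - p₀ θ) = (∑ θ, v θ * r θ) - ∑ θ, v θ * p₀ θ := by
      rw [← Finset.sum_sub_distrib]; congr 1; ext θ; ring
    rw [hsub] at this
    linarith
  -- |a| ≤ S
  have haS : |a| ≤ S := by
    have h1 : |a| ≤ ∑ θ, |v θ * p₀ θ| := Finset.abs_sum_le_sum_abs _ _
    have h2 : ∑ θ, |v θ * p₀ θ| ≤ S := by
      apply Finset.sum_le_sum
      intro θ _
      rw [abs_mul]
      have hθ1 : p₀ θ ≤ 1 := by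
        obtain ⟨hpos, hsum⟩ := hPsub hp₀
        calc p₀ θ ≤ ∑ θ', p₀ θ' :=
              Finset.single_le_sum (fun θ' _ => hpos θ') (Finset.mem_univ θ)
          _ = 1 := hsum
      have hθ0 : 0 ≤ p₀ θ := (hPsub hp₀).1 θ
      calc |v θ| * |p₀ θ| = |v θ| * p₀ θ := by rw [abs_of_nonneg hθ0]
        _ ≤ |v θ| * 1 := mul_le_mul_of_nonneg_left hθ1 (abs_nonneg _)
        _ = |v θ| := mul_one _
    exact h1.trans h2
  have hεa : |ε * a| ≤ 1 / 2 := by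
    rw [abs_mul, abs_of_pos hεpos]
    calc ε * |a| ≤ ε * (S + 1) := by
          apply mul_le_mul_of_nonneg_left _ hεpos.le
          linarith
      _ = 1 / 2 := by rw [hε]; field_simp
  -- the experiment
  set π : Θ → Bool → ℝ := fun θ y => if y then (1 + ε * v θ) / 2 else (1 - ε * v θ) / 2
    with hπ
  set μ : Bool → ℝ := fun y => if y then (1 + ε * a) / 2 else (1 - ε * a) / 2 with hμ
  have hπnn : ∀ θ y, 0 ≤ π θ y := by
    intro θ y
    have := hεv θ
    have h1 := abs_le.mp this
    cases y <;> simp [hπ] <;> linarith [h1.1, h1.2]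
  have hπsum : ∀ θ, ∑ y, π θ y = 1 := by
    intro θ
    rw [Fintype.sum_bool]
    simp [hπ]; ring
  have hcons : ∀ r ∈ P, ∀ y, ∑ θ, π θ y * r θ = μ y := by
    intro r hr y
    have h1 : ∑ θ, v θ * r θ = a := hconst r hr
    have h2 : ∑ θ, r θ = 1 := (hPsub hr).2
    cases y
    · have : ∑ θ, π θ false * r θ = (∑ θ, r θ) / 2 - ε / 2 * ∑ θ, v θ * r θ := by
        rw [Finset.sum_div, Finset.mul_sum, ← Finset.sum_sub_distrib]
        congr 1; ext θ; simp [hπ]; ring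
      rw [this, h1, h2]; simp [hμ]; ring
    · have : ∑ θ, π θ true * r θ = (∑ θ, r θ) / 2 + ε / 2 * ∑ θ, v θ * r θ := by
        rw [Finset.sum_div, Finset.mul_sum, ← Finset.sum_add_distrib]
        congr 1; ext θ; simp [hπ]; ring
      rw [this, h1, h2]; simp [hμ]; ring
  have hμpos : ∀ y, 0 < μ y := by
    intro y
    have h1 := abs_le.mp hεa
    cases y <;> simp [hμ] <;> linarith [h1.1, h1.2]
  have hset := H Bool inferInstance π μ hπnn hπsum hcons hμpos
  -- the mixed element r
  set r : Θ → ℝ := fun θ => π θ true * p θ + π θ false * p' θ with hrdef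
  have hrP : r ∈ P := by
    rw [← hset]
    refine ⟨fun y θ => π θ y * (if y then p θ else p' θ) / μ y, ?_, ?_⟩
    · intro y
      cases y
      · exact ⟨p', hp', by ext θ; simp⟩
      · exact ⟨p, hp, by ext θ; simp⟩
    · ext θ
      rw [Fintype.sum_bool]
      have h1 := (hμpos true).ne'
      have h2 := (hμpos false).ne'
      simp only [if_true, if_false, hrdef]
      field_simp
      simp
  have key : ∑ θ, v' θ * (r θ - p' θ) = 0 := hv' r hrP p' hp'
  have hrsub : ∀ θ, v' θ * (r θ - p' θ) =
      (1 / 2) * (v' θ * (p θ - p' θ)) + (ε / 2) * ((v θ * v' θ) * (p θ - p' θ)) := by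
    intro θ
    simp only [hrdef, hπ]
    norm_num
    ring
  have hexp : ∑ θ, v' θ * (r θ - p' θ) =
      (1 / 2) * (∑ θ, v' θ * (p θ - p' θ)) + (ε / 2) * ∑ θ, (v θ * v' θ) * (p θ - p' θ) := by
    rw [Finset.mul_sum, Finset.mul_sum, ← Finset.sum_add_distrib]
    exact Finset.sum_congr rfl fun θ _ => hrsub θ
  rw [hexp, hv' p hp p' hp', mul_zero, zero_add] at key
  have hε2 : ε / 2 ≠ 0 := by positivity
  exact (mul_eq_zero.mp key).resolve_left hε2
end

section
/- Reduced-form weights of posterior sets in an Aumann-plausible structure are deterministic: suppose P₀ = Σ_φ τ(φ) P_φ is partially identified by (τ, Φ), and μ ∈ Δ(Y) with support on compact convex sets {P_y}_{y∈Y} satisfies Σ_y μ(y) P_y = P₀. Then for every y ∈ Y with μ(y) > 0 and every φ ∈ Φ, the linear functional f_φ(p) = Σ_{θ∈φ} p(θ) is constant on P_y; moreover, denoting this constant τ_y(φ), one has Σ_y μ(y) τ_y(φ) = τ(φ). -/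
open Finset

/-- In an Aumann-plausible information structure over a partially identified prior set,
the reduced-form weights of the posterior sets are deterministic: for each `y` with
`μ y > 0`, the functional `p ↦ ∑_{θ ∈ φ} p θ` is constant on `P_y`, with value `τ_y φ`
satisfying `∑ y, μ y * τ_y φ = τ φ`. -/
theorem stmt18 {Θ Φ Y : Type*} [Fintype Θ] [Fintype Φ] [Fintype Y] [DecidableEq Φ]
    (cell : Θ → Φ) (hcell : Function.Surjective cell)
    (τ : Φ → ℝ) (hτ0 : ∀ i, 0 < τ i) (hτ1 : ∑ i, τ i = 1)
    (Pφ : Φ → Set (Θ → ℝ))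
    (hPφ : ∀ i, ∀ q ∈ Pφ i, q ∈ simplex Θ ∧ ∀ θ, cell θ ≠ i → q θ = 0)
    (hdim : ∀ i, Module.finrank ℝ (vectorSpan ℝ (Pφ i)) =
      (Finset.univ.filter (fun θ => cell θ = i)).card - 1)
    (P₀ : Set (Θ → ℝ)) (hP₀ : P₀ = mix τ Pφ)
    (μ : Y → ℝ) (hμ0 : ∀ y, 0 ≤ μ y) (hμ1 : ∑ y, μ y = 1)
    (Py : Y → Set (Θ → ℝ))
    (hPy : ∀ y, (Py y).Nonempty ∧ IsCompact (Py y) ∧ Convex ℝ (Py y) ∧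
      Py y ⊆ simplex Θ)
    (hAP : mix μ Py = P₀) :
    (∀ y, 0 < μ y → ∀ p ∈ Py y, ∀ p' ∈ Py y, ∀ i,
        ∑ θ ∈ Finset.univ.filter (fun θ => cell θ = i), p θ =
        ∑ θ ∈ Finset.univ.filter (fun θ => cell θ = i), p' θ) ∧
    ∃ τy : Y → Φ → ℝ,
      (∀ y, 0 < μ y → ∀ p ∈ Py y, ∀ i,
        ∑ θ ∈ Finset.univ.filter (fun θ => cell θ = i), p θ = τy y i) ∧
      (∀ i, ∑ y, μ y * τy y i = τ i) := by

  classical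
  have key : ∀ p ∈ P₀, ∀ i,
      ∑ θ ∈ Finset.univ.filter (fun θ => cell θ = i), p θ = τ i := by
    intro p hp i
    rw [hP₀] at hp
    obtain ⟨q, hq, rfl⟩ := hp
    have hval : ∀ j, ∑ θ ∈ Finset.univ.filter (fun θ => cell θ = i), q j θ
        = if j = i then 1 else 0 := by
      intro j
      by_cases hji : j = i
      · subst hji
        rw [if_pos rfl, ← (hPφ j (q j) (hq j)).1.2]
        apply Finset.sum_subset (Finset.filter_subset _ _)
        intro θ _ hθ
        simp only [Finset.mem_filter, Finset.mem_univ, true_and] at hθ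
        exact (hPφ j (q j) (hq j)).2 θ hθ
      · simp only [if_neg hji]
        apply Finset.sum_eq_zero
        intro θ hθ
        simp only [Finset.mem_filter, Finset.mem_univ, true_and] at hθ
        exact (hPφ j (q j) (hq j)).2 θ (by rw [hθ]; exact fun h => hji h.symm)
    calc ∑ θ ∈ Finset.univ.filter (fun θ => cell θ = i), ∑ j, τ j * q j θ
        = ∑ j, τ j * ∑ θ ∈ Finset.univ.filter (fun θ => cell θ = i), q j θ := by
          rw [Finset.sum_comm]
          simp [Finset.mul_sum]
      _ = ∑ j, τ j * if j = i then 1 else 0 := by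
          exact Finset.sum_congr rfl fun j _ => by rw [hval j]
      _ = τ i := by simp
  choose q0 hq0 using fun y => (hPy y).1
  have swap : ∀ (r : Y → Θ → ℝ) i,
      ∑ θ ∈ Finset.univ.filter (fun θ => cell θ = i), (∑ z, μ z * r z θ)
        = ∑ z, μ z * ∑ θ ∈ Finset.univ.filter (fun θ => cell θ = i), r z θ := by
    intro r i
    rw [Finset.sum_comm]
    simp [Finset.mul_sum]
  have mk : ∀ y, ∀ r ∈ Py y,
      (fun θ => ∑ z, μ z * (Function.update q0 y r) z θ) ∈ P₀ := by
    intro y r hr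
    rw [← hAP]
    refine ⟨Function.update q0 y r, fun z => ?_, rfl⟩
    by_cases hz : z = y
    · subst hz; simpa using hr
    · simpa [Function.update_of_ne hz] using hq0 z
  have const : ∀ y, 0 < μ y → ∀ p ∈ Py y, ∀ i,
      ∑ θ ∈ Finset.univ.filter (fun θ => cell θ = i), p θ =
      ∑ θ ∈ Finset.univ.filter (fun θ => cell θ = i), q0 y θ := by
    intro y hy p hp i
    have e1 := key _ (mk y p hp) i
    have e2 := key _ (mk y (q0 y) (hq0 y)) i
    rw [swap] at e1 e2
    rw [← Finset.add_sum_erase _ _ (Finset.mem_univ y)] at e1 e2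
    have hrest : ∀ z ∈ Finset.univ.erase y,
        μ z * ∑ θ ∈ Finset.univ.filter (fun θ => cell θ = i),
          (Function.update q0 y p) z θ
        = μ z * ∑ θ ∈ Finset.univ.filter (fun θ => cell θ = i),
          (Function.update q0 y (q0 y)) z θ := by
      intro z hz
      have hzy : z ≠ y := Finset.ne_of_mem_erase hz
      simp [Function.update_of_ne hzy]
    rw [Finset.sum_congr rfl hrest] at e1
    have : μ y * ∑ θ ∈ Finset.univ.filter (fun θ => cell θ = i),
        (Function.update q0 y p) y θ
        = μ y * ∑ θ ∈ Finset.univ.filter (fun θ => cell θ = i),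
        (Function.update q0 y (q0 y)) y θ := by linarith
    simp only [Function.update_self] at this
    exact mul_left_cancel₀ (ne_of_gt hy) this
  constructor
  · intro y hy p hp p' hp' i
    rw [const y hy p hp i, const y hy p' hp' i]
  · refine ⟨fun y i => ∑ θ ∈ Finset.univ.filter (fun θ => cell θ = i), q0 y θ,
      fun y hy p hp i => const y hy p hp i, fun i => ?_⟩
    have hmem : (fun θ => ∑ z, μ z * q0 z θ) ∈ P₀ := by
      rw [← hAP]; exact ⟨q0, hq0, rfl⟩
    have := key _ hmem i
    rw [swap] at this
    exact this
end
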